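/- Let f : ℝ^n → ℝ be μ-strongly convex and L-smooth with 0 < μ ≤ L, let A ∈ ℝ^{p×n}, Ψ(x, y) = ⟨A^T y, x⟩ − f(x), φ(y) = max_{x ∈ ℝ^n} Ψ(x, y), and let x*(A^T y) denote the unique maximizer. Set L_φ = λ_max(A^T A)/μ and μ_φ = λ_min⁺(A^T A)/L. Fix y ∈ ℝ^p and ξ > 0, and let w ∈ ℝ^n satisfy Ψ(x*(A^T y), y) − Ψ(w, y) ≤ ξ. Then the pair (Ψ(w, y) − ξ, A w) is a (3ξ, 2L_φ, μ_φ/2)-oracle for φ at y: for all y' ∈ ℝ^p, φ(y') − (Ψ(w, y) − ξ + ⟨A w, y' − y⟩) ≤ L_φ·‖y' − y‖₂² + 3ξ, and for all y' with y' − y ∈ range(A), φ(y') − (Ψ(w, y) − ξ + ⟨A w, y' − y⟩) ≥ (μ_φ/4)·‖y' − y‖₂². -/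

import Mathlib

open RealInnerProductSpace Matrix

section SpectralAux

lemma inner_tEL {a b : ℕ} (A : Matrix (Fin a) (Fin b) ℝ) (v : EuclideanSpace ℝ (Fin b))
    (u : EuclideanSpace ℝ (Fin a)) :
    ⟪Matrix.toEuclideanLin A v, u⟫ = ⟪v, Matrix.toEuclideanLin Aᵀ u⟫ := by
  simp only [PiLp.inner_apply, RCLike.inner_apply, conj_trivial, toEuclideanLin_apply]
  simp only [Matrix.mulVec, dotProduct,
    Matrix.transpose_apply, Finset.sum_mul, Finset.mul_sum]
  rw [Finset.sum_comm]
  congr 1; ext i; congr 1; ext j; ring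

lemma tEL_mul {a b c : ℕ} (M : Matrix (Fin a) (Fin b) ℝ) (N : Matrix (Fin b) (Fin c) ℝ)
    (x : EuclideanSpace ℝ (Fin c)) :
    Matrix.toEuclideanLin (M * N) x = Matrix.toEuclideanLin M (Matrix.toEuclideanLin N x) := by
  simp [toEuclideanLin_apply, Matrix.mulVec_mulVec]

variable {n p : ℕ}

lemma spec_ATA_nonneg (A : Matrix (Fin p) (Fin n) ℝ) {r : ℝ}
    (hr : r ∈ spectrum ℝ (Aᵀ * A)) : 0 ≤ r := by
  rw [← Matrix.spectrum_toEuclideanLin,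
    ← Module.End.hasEigenvalue_iff_mem_spectrum] at hr
  obtain ⟨x, hx⟩ := hr.exists_hasEigenvector
  have hx' : Matrix.toEuclideanLin (Aᵀ * A) x = r • x := hx.apply_eq_smul
  have h1 : r * ‖x‖ ^ 2 = ‖Matrix.toEuclideanLin A x‖ ^ 2 := by
    have h2 := inner_tEL A x (Matrix.toEuclideanLin A x)
    rw [real_inner_self_eq_norm_sq] at h2
    rw [h2, ← tEL_mul, hx', real_inner_smul_right, real_inner_self_eq_norm_sq]
  have hxn : 0 < ‖x‖ ^ 2 := by
    have := norm_pos_iff.2 hx.right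
    positivity
  nlinarith [sq_nonneg ‖Matrix.toEuclideanLin A x‖]

lemma eig_mem_spec_ATA (A : Matrix (Fin p) (Fin n) ℝ) {ν : ℝ} (hν : ν ≠ 0)
    {x : EuclideanSpace ℝ (Fin p)} (hx0 : x ≠ 0)
    (hx : Matrix.toEuclideanLin (A * Aᵀ) x = ν • x) : ν ∈ spectrum ℝ (Aᵀ * A) := by
  rw [← Matrix.spectrum_toEuclideanLin, ← Module.End.hasEigenvalue_iff_mem_spectrum]
  apply Module.End.hasEigenvalue_of_hasEigenvector (x := Matrix.toEuclideanLin Aᵀ x)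
  constructor
  · rw [Module.End.mem_eigenspace_iff]
    show Matrix.toEuclideanLin (Aᵀ * A) (Matrix.toEuclideanLin Aᵀ x) = _
    rw [← tEL_mul, Matrix.mul_assoc, tEL_mul, hx, _root_.map_smul]
  · intro h
    apply hν
    have h0 : Matrix.toEuclideanLin (A * Aᵀ) x = 0 := by rw [tEL_mul, h, map_zero]
    rw [hx] at h0
    simpa [hx0] using (smul_eq_zero.mp h0)

lemma herm_AAT (A : Matrix (Fin p) (Fin n) ℝ) : (A * Aᵀ).IsHermitian := by
  simpa using Matrix.isHermitian_mul_conjTranspose_self A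

lemma tEL_eigen {B : Matrix (Fin p) (Fin p) ℝ} (hB : B.IsHermitian) (i : Fin p) :
    Matrix.toEuclideanLin B (hB.eigenvectorBasis i) =
      hB.eigenvalues i • hB.eigenvectorBasis i := by
  have := hB.mulVec_eigenvectorBasis i
  apply (WithLp.equiv 2 _).injective
  simpa [toEuclideanLin_apply] using this

variable (A : Matrix (Fin p) (Fin n) ℝ)

lemma norm_sq_decomp (u : EuclideanSpace ℝ (Fin p)) :
    ‖u‖ ^ 2 = ∑ i, ⟪(herm_AAT A).eigenvectorBasis i, u⟫ ^ 2 := by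
  have h := ((herm_AAT A).eigenvectorBasis).sum_inner_mul_inner u u
  rw [real_inner_self_eq_norm_sq] at h
  rw [← h]
  congr 1; ext i
  rw [real_inner_comm, sq]

lemma quad_decomp (u : EuclideanSpace ℝ (Fin p)) :
    ‖Matrix.toEuclideanLin Aᵀ u‖ ^ 2 =
      ∑ i, (herm_AAT A).eigenvalues i * ⟪(herm_AAT A).eigenvectorBasis i, u⟫ ^ 2 := by
  set hB := herm_AAT A
  set e := hB.eigenvectorBasis
  have h1 : ‖Matrix.toEuclideanLin Aᵀ u‖ ^ 2 = ⟪u, Matrix.toEuclideanLin (A * Aᵀ) u⟫ := by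
    rw [← real_inner_self_eq_norm_sq, inner_tEL Aᵀ u, Matrix.transpose_transpose, ← tEL_mul]
  rw [h1,
    ← ((herm_AAT A).eigenvectorBasis).sum_inner_mul_inner u (Matrix.toEuclideanLin (A * Aᵀ) u)]
  congr 1; ext i
  have h2 : ⟪e i, Matrix.toEuclideanLin (A * Aᵀ) u⟫ = hB.eigenvalues i * ⟪e i, u⟫ := by
    have h3 := inner_tEL (A * Aᵀ) (e i) u
    rw [Matrix.transpose_mul, Matrix.transpose_transpose] at h3
    rw [← h3, tEL_eigen hB i, real_inner_smul_left]
  rw [h2, real_inner_comm u (e i)]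
  ring

lemma eigenvalue_AAT_eq (i : Fin p) :
    (herm_AAT A).eigenvalues i
      = ‖Matrix.toEuclideanLin Aᵀ ((herm_AAT A).eigenvectorBasis i)‖ ^ 2 := by
  set hB := herm_AAT A
  set e := hB.eigenvectorBasis
  have h1 : ‖Matrix.toEuclideanLin Aᵀ (e i)‖ ^ 2 = ⟪e i, Matrix.toEuclideanLin (A * Aᵀ) (e i)⟫ := by
    rw [← real_inner_self_eq_norm_sq, inner_tEL Aᵀ (e i), Matrix.transpose_transpose, ← tEL_mul]
  rw [h1, tEL_eigen hB i, real_inner_smul_right, real_inner_self_eq_norm_sq,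
    e.orthonormal.1 i]
  norm_num

lemma quadU (u : EuclideanSpace ℝ (Fin p)) :
    ‖Matrix.toEuclideanLin Aᵀ u‖ ^ 2 ≤ sSup (spectrum ℝ (Aᵀ * A)) * ‖u‖ ^ 2 := by
  set M := sSup (spectrum ℝ (Aᵀ * A)) with hM
  have hbdd : BddAbove (spectrum ℝ (Aᵀ * A)) := (Matrix.finite_spectrum _).bddAbove
  have hM0 : 0 ≤ M := by
    rcases Set.eq_empty_or_nonempty (spectrum ℝ (Aᵀ * A)) with h | ⟨r, hr⟩
    · rw [hM, h, Real.sSup_empty]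
    · exact le_trans (spec_ATA_nonneg A hr) (le_csSup hbdd hr)
  rw [quad_decomp, norm_sq_decomp A u, Finset.mul_sum]
  apply Finset.sum_le_sum
  intro i _
  set ν := (herm_AAT A).eigenvalues i
  by_cases hν : ν = 0
  · rw [hν, zero_mul]
    exact mul_nonneg hM0 (sq_nonneg _)
  · have hmem : ν ∈ spectrum ℝ (Aᵀ * A) := by
      apply eig_mem_spec_ATA A hν (x := (herm_AAT A).eigenvectorBasis i)
      · intro h
        have := (herm_AAT A).eigenvectorBasis.orthonormal.1 i
        rw [h, norm_zero] at this; norm_num at this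
      · exact tEL_eigen _ i
    exact mul_le_mul_of_nonneg_right (le_csSup hbdd hmem) (sq_nonneg _)

lemma quadL (u : EuclideanSpace ℝ (Fin p))
    (hu : u ∈ LinearMap.range (Matrix.toEuclideanLin A)) :
    sInf (spectrum ℝ (Aᵀ * A) ∩ Set.Ioi 0) * ‖u‖ ^ 2 ≤ ‖Matrix.toEuclideanLin Aᵀ u‖ ^ 2 := by
  obtain ⟨v, rfl⟩ := hu
  have hbdd : BddBelow (spectrum ℝ (Aᵀ * A) ∩ Set.Ioi 0) :=
    ⟨0, fun x hx => le_of_lt hx.2⟩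
  rw [quad_decomp, norm_sq_decomp A, Finset.mul_sum]
  apply Finset.sum_le_sum
  intro i _
  by_cases hν : (herm_AAT A).eigenvalues i = 0
  · have hker : Matrix.toEuclideanLin Aᵀ ((herm_AAT A).eigenvectorBasis i) = 0 := by
      have h4 := eigenvalue_AAT_eq A i
      rw [hν] at h4
      have h5 := (sq_eq_zero_iff.mp h4.symm)
      rwa [norm_eq_zero] at h5
    have hc : ⟪(herm_AAT A).eigenvectorBasis i, Matrix.toEuclideanLin A v⟫ = 0 := by
      rw [real_inner_comm, inner_tEL A v, hker, inner_zero_right]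
    rw [hc, hν]
    norm_num
  · have hνpos : 0 < (herm_AAT A).eigenvalues i := by
      have h0 : 0 ≤ (herm_AAT A).eigenvalues i := by
        rw [eigenvalue_AAT_eq A i]; positivity
      exact lt_of_le_of_ne h0 (Ne.symm hν)
    have hmem : (herm_AAT A).eigenvalues i ∈ spectrum ℝ (Aᵀ * A) ∩ Set.Ioi 0 := by
      refine ⟨?_, hνpos⟩
      apply eig_mem_spec_ATA A hν (x := (herm_AAT A).eigenvectorBasis i)
      · intro h
        have := (herm_AAT A).eigenvectorBasis.orthonormal.1 i
        rw [h, norm_zero] at this; norm_num at this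
      · exact tEL_eigen _ i
    exact mul_le_mul_of_nonneg_right (csInf_le hbdd hmem) (sq_nonneg _)

end SpectralAux

section AnalysisAux

variable {k : ℕ}

lemma grad_eq_of_isMaxOn (f : EuclideanSpace ℝ (Fin k) → ℝ) (hdiff : Differentiable ℝ f)
    (s x₀ : EuclideanSpace ℝ (Fin k))
    (hmax : IsMaxOn (fun x => ⟪s, x⟫ - f x) Set.univ x₀) : gradient f x₀ = s := by
  have hloc : IsLocalMax (fun x => ⟪s, x⟫ - f x) x₀ := hmax.isLocalMax Filter.univ_mem
  have hf : HasFDerivAt f (InnerProductSpace.toDual ℝ _ (gradient f x₀)) x₀ :=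
    (hdiff x₀).hasGradientAt
  have hs : HasFDerivAt (fun x : EuclideanSpace ℝ (Fin k) => ⟪s, x⟫) (innerSL ℝ s) x₀ := by
    simpa [innerSL_apply_apply] using (innerSL ℝ s).hasFDerivAt (x := x₀)
  have h0 := hloc.hasFDerivAt_eq_zero (hs.sub hf)
  have h1 : ∀ v, ⟪s - gradient f x₀, v⟫ = 0 := by
    intro v
    have := congrFun (congrArg (fun (T : EuclideanSpace ℝ (Fin k) →L[ℝ] ℝ) => ⇑T) h0) v
    simpa [inner_sub_left, InnerProductSpace.toDual_apply_apply, sub_eq_zero] using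
      (by simpa using this : ⟪s, v⟫ - ⟪gradient f x₀, v⟫ = 0)
  have h2 := h1 (s - gradient f x₀)
  rw [inner_self_eq_zero] at h2
  rw [sub_eq_zero] at h2
  exact h2.symm

lemma descent_lemma (f : EuclideanSpace ℝ (Fin k) → ℝ) (L : ℝ) (hdiff : Differentiable ℝ f)
    (hsmooth : ∀ x y : EuclideanSpace ℝ (Fin k),
      ‖gradient f x - gradient f y‖ ≤ L * ‖x - y‖)
    (x v : EuclideanSpace ℝ (Fin k)) :
    f (x + v) ≤ f x + ⟪gradient f x, v⟫ + L / 2 * ‖v‖ ^ 2 := by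
  have hg : ∀ t : ℝ, HasDerivAt (fun t : ℝ => f (x + t • v)) ⟪gradient f (x + t • v), v⟫ t := by
    intro t
    have hline : HasDerivAt (fun t : ℝ => x + t • v) v t := by
      simpa using ((hasDerivAt_id t).smul_const v).const_add x
    have hf : HasFDerivAt f (InnerProductSpace.toDual ℝ _ (gradient f (x + t • v))) (x + t • v) :=
      (hdiff _).hasGradientAt
    have := hf.comp_hasDerivAt t hline
    simpa [InnerProductSpace.toDual_apply_apply, Function.comp_def] using this
  set F := fun t : ℝ => f x + t * ⟪gradient f x, v⟫ + L / 2 * (t ^ 2 * ‖v‖ ^ 2) - f (x + t • v)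
    with hFdef
  have hF : ∀ t : ℝ, HasDerivAt F
      (⟪gradient f x, v⟫ + L * t * ‖v‖ ^ 2 - ⟪gradient f (x + t • v), v⟫) t := by
    intro t
    have ha : HasDerivAt (fun t : ℝ => f x + t * ⟪gradient f x, v⟫) ⟪gradient f x, v⟫ t := by
      simpa using ((hasDerivAt_id t).mul_const ⟪gradient f x, v⟫).const_add (f x)
    have hb : HasDerivAt (fun t : ℝ => L / 2 * (t ^ 2 * ‖v‖ ^ 2)) (L * t * ‖v‖ ^ 2) t := by
      have := ((hasDerivAt_pow 2 t).mul_const (‖v‖ ^ 2)).const_mul (L / 2)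
      refine this.congr_deriv ?_
      ring
    exact (ha.add hb).sub (hg t)
  have mono : MonotoneOn F (Set.Icc (0:ℝ) 1) := by
    apply monotoneOn_of_deriv_nonneg (convex_Icc 0 1)
    · exact fun t _ => (hF t).continuousAt.continuousWithinAt
    · exact fun t _ => (hF t).differentiableAt.differentiableWithinAt
    · intro t ht
      rw [interior_Icc] at ht
      rw [(hF t).deriv]
      have hlip := hsmooth (x + t • v) x
      have h1 : ‖x + t • v - x‖ = t * ‖v‖ := by
        rw [add_sub_cancel_left, norm_smul, Real.norm_eq_abs, abs_of_pos ht.1]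
      rw [h1] at hlip
      have h2 : ⟪gradient f (x + t • v) - gradient f x, v⟫ ≤
          ‖gradient f (x + t • v) - gradient f x‖ * ‖v‖ := real_inner_le_norm _ _
      rw [inner_sub_left] at h2
      nlinarith [norm_nonneg v, norm_nonneg (gradient f (x + t • v) - gradient f x)]
  have h01 := mono (Set.left_mem_Icc.2 zero_le_one) (Set.right_mem_Icc.2 zero_le_one) zero_le_one
  have hF0 : F 0 = 0 := by simp [hFdef]
  have hF1 : F 1 = f x + ⟪gradient f x, v⟫ + L / 2 * ‖v‖ ^ 2 - f (x + v) := by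
    simp [hFdef]
  rw [hF0, hF1] at h01
  linarith

end AnalysisAux
set_option maxHeartbeats 1000000 in
/-- An `ξ`-approximate maximizer of the inner problem `Ψ(·,y)` yields a
`(3ξ, 2L_φ, μ_φ/2)`-oracle for the dual function `φ` at `y`. -/
theorem inexact_inner_max_gives_oracle
    {n p : ℕ} (f : EuclideanSpace ℝ (Fin n) → ℝ) (μ L : ℝ)
    (hμ : 0 < μ) (hμL : μ ≤ L)
    (hdiff : Differentiable ℝ f)
    (hsc : ∀ x y : EuclideanSpace ℝ (Fin n),
      f x + ⟪gradient f x, y - x⟫ + μ / 2 * ‖y - x‖ ^ 2 ≤ f y)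
    (hsmooth : ∀ x y : EuclideanSpace ℝ (Fin n),
      ‖gradient f x - gradient f y‖ ≤ L * ‖x - y‖)
    (A : Matrix (Fin p) (Fin n) ℝ)
    (Ψ : EuclideanSpace ℝ (Fin n) → EuclideanSpace ℝ (Fin p) → ℝ)
    (hΨ : ∀ x y, Ψ x y = ⟪Matrix.toEuclideanLin Aᵀ y, x⟫ - f x)
    (xstar : EuclideanSpace ℝ (Fin p) → EuclideanSpace ℝ (Fin n))
    (hxstar : ∀ y, IsMaxOn (fun x => Ψ x y) Set.univ (xstar y))
    (hxstar_uniq : ∀ y x', IsMaxOn (fun x => Ψ x y) Set.univ x' → x' = xstar y)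
    (φ : EuclideanSpace ℝ (Fin p) → ℝ)
    (hφ : ∀ y, φ y = Ψ (xstar y) y)
    (Lφ μφ : ℝ)
    (hLφ : Lφ = sSup (spectrum ℝ (Aᵀ * A)) / μ)
    (hμφ : μφ = sInf (spectrum ℝ (Aᵀ * A) ∩ Set.Ioi 0) / L)
    (y : EuclideanSpace ℝ (Fin p)) (ξ : ℝ) (hξ : 0 < ξ)
    (w : EuclideanSpace ℝ (Fin n))
    (hw : Ψ (xstar y) y - Ψ w y ≤ ξ) :
    (∀ y' : EuclideanSpace ℝ (Fin p),
      φ y' - ((Ψ w y - ξ) + ⟪Matrix.toEuclideanLin A w, y' - y⟫) ≤ Lφ * ‖y' - y‖ ^ 2 + 3 * ξ) ∧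
    (∀ y' : EuclideanSpace ℝ (Fin p), y' - y ∈ LinearMap.range (Matrix.toEuclideanLin A) →
      μφ / 4 * ‖y' - y‖ ^ 2 ≤ φ y' - ((Ψ w y - ξ) + ⟪Matrix.toEuclideanLin A w, y' - y⟫)) := by
  have hL : (0:ℝ) < L := lt_of_lt_of_le hμ hμL
  set s : EuclideanSpace ℝ (Fin n) := Matrix.toEuclideanLin Aᵀ y with hs
  set gw : EuclideanSpace ℝ (Fin n) := gradient f w with hgw
  have hgrad : ∀ y₀ : EuclideanSpace ℝ (Fin p),
      gradient f (xstar y₀) = Matrix.toEuclideanLin Aᵀ y₀ := by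
    intro y₀
    apply grad_eq_of_isMaxOn f hdiff
    have h := hxstar y₀
    simp only [hΨ] at h
    exact h
  have hgxs : gradient f (xstar y) = s := by rw [hgrad y, ← hs]
  have hΨle : ∀ (x : EuclideanSpace ℝ (Fin n)) (y₀ : EuclideanSpace ℝ (Fin p)),
      Ψ x y₀ ≤ Ψ (xstar y₀) y₀ := fun x y₀ => (isMaxOn_iff.mp (hxstar y₀)) x (Set.mem_univ x)
  have hΨw' : Ψ w y = ⟪s, w⟫ - f w := by rw [hΨ, ← hs]
  have hΨxs : Ψ (xstar y) y = ⟪s, xstar y⟫ - f (xstar y) := by rw [hΨ, ← hs]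
  -- strong concavity : distance to the maximizer
  have hdist : μ / 2 * ‖xstar y - w‖ ^ 2 ≤ Ψ (xstar y) y - Ψ w y := by
    have h := hsc (xstar y) w
    rw [hgxs, inner_sub_right, norm_sub_rev w (xstar y)] at h
    rw [hΨxs, hΨw']
    linarith
  have hgap0 : 0 ≤ Ψ (xstar y) y - Ψ w y := sub_nonneg.2 (hΨle w y)
  -- PL-type bound : ‖gw - s‖² ≤ 2 L ξ
  have hPL : ‖gw - s‖ ^ 2 ≤ 2 * L * ξ := by
    set u0 : EuclideanSpace ℝ (Fin n) := gw - s with hu0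
    set m : ℝ := ‖u0‖ with hm
    have hdesc := descent_lemma f L hdiff hsmooth w ((-L⁻¹) • u0)
    have hn : ‖(-L⁻¹) • u0‖ ^ 2 = L⁻¹ ^ 2 * m ^ 2 := by
      rw [norm_smul, Real.norm_eq_abs, abs_neg, abs_of_pos (inv_pos.2 hL), mul_pow]
    have hi1 : ⟪gw, (-L⁻¹) • u0⟫ = -L⁻¹ * ⟪gw, u0⟫ := real_inner_smul_right _ _ _
    have hi2 : ⟪s, (-L⁻¹) • u0⟫ = -L⁻¹ * ⟪s, u0⟫ := real_inner_smul_right _ _ _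
    have hi3 : ⟪gw, u0⟫ - ⟪s, u0⟫ = m ^ 2 := by
      rw [hm, hu0, ← inner_sub_left, real_inner_self_eq_norm_sq]
    have hΨz : Ψ (w + (-L⁻¹) • u0) y = ⟪s, w⟫ + -L⁻¹ * ⟪s, u0⟫ - f (w + (-L⁻¹) • u0) := by
      rw [hΨ, ← hs, inner_add_right, hi2]
    have hub := hΨle (w + (-L⁻¹) • u0) y
    rw [hΨz] at hub
    have hgapw : Ψ (xstar y) y ≤ Ψ w y + ξ := by linarith
    rw [hn, hi1] at hdesc
    have hid1 : -L⁻¹ * ⟪s, u0⟫ - (-L⁻¹ * ⟪gw, u0⟫) = L⁻¹ * m ^ 2 := by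
      rw [← hi3]; ring
    have hid2 : L⁻¹ * m ^ 2 - L / 2 * (L⁻¹ ^ 2 * m ^ 2) = 1 / (2 * L) * m ^ 2 := by
      field_simp
      ring
    have hfin : 1 / (2 * L) * m ^ 2 ≤ ξ := by linarith
    have h2L : (0:ℝ) < 2 * L := by linarith
    calc m ^ 2 = (1 / (2 * L) * m ^ 2) * (2 * L) := by field_simp
    _ ≤ ξ * (2 * L) := mul_le_mul_of_nonneg_right hfin h2L.le
    _ = 2 * L * ξ := by ring
  refine ⟨?_, ?_⟩
  -- upper bound
  · intro y'
    set s' : EuclideanSpace ℝ (Fin n) := Matrix.toEuclideanLin Aᵀ y' with hs'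
    set d : EuclideanSpace ℝ (Fin p) := y' - y with hd
    have hds : s' - s = Matrix.toEuclideanLin Aᵀ d := by rw [hd, hs', hs, map_sub]
    have hAd : ⟪Matrix.toEuclideanLin A w, d⟫ = ⟪w, s' - s⟫ := by
      rw [inner_tEL A w d, ← hds]
    set r : ℝ := ‖s' - s‖ with hr
    have H4 : r ^ 2 ≤ sSup (spectrum ℝ (Aᵀ * A)) * ‖d‖ ^ 2 := by
      rw [hr, hds]; exact quadU A d
    have e2 := hsc (xstar y) (xstar y')
    rw [hgxs, inner_sub_right] at e2
    have e3 : ⟪s' - s, xstar y' - xstar y⟫ ≤ r * ‖xstar y' - xstar y‖ := by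
      rw [hr]; exact real_inner_le_norm _ _
    have id1 : ⟪s', xstar y'⟫ - (⟪s, xstar y'⟫ - ⟪s, xstar y⟫) - ⟪s, xstar y⟫
        - ⟪xstar y, s' - s⟫ = ⟪s' - s, xstar y' - xstar y⟫ := by
      simp only [inner_sub_left, inner_sub_right]
      rw [real_inner_comm (xstar y) s', real_inner_comm (xstar y) s]
      ring
    have hφy' : φ y' = ⟪s', xstar y'⟫ - f (xstar y') := by rw [hφ y', hΨ, ← hs']
    have hφy : φ y = ⟪s, xstar y⟫ - f (xstar y) := by rw [hφ y, hΨxs]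
    have step1 : φ y' ≤ φ y + ⟪xstar y, s' - s⟫
        + (⟪s' - s, xstar y' - xstar y⟫ - μ / 2 * ‖xstar y' - xstar y‖ ^ 2) := by
      rw [hφy', hφy]
      linarith [e2, id1]
    have step2 : 2 * μ * (⟪s' - s, xstar y' - xstar y⟫
        - μ / 2 * ‖xstar y' - xstar y‖ ^ 2) ≤ r ^ 2 := by
      linarith [sq_nonneg (μ * ‖xstar y' - xstar y‖ - r),
        mul_nonneg hμ.le (sub_nonneg.2 e3), sq_abs r]
    have step1' := mul_le_mul_of_nonneg_left step1 (by positivity : (0:ℝ) ≤ 2 * μ)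
    have H1' : 2 * μ * (φ y') ≤ 2 * μ * (φ y + ⟪xstar y, s' - s⟫) + r ^ 2 := by
      linarith [step1', step2]
    have id2 : ⟪xstar y, s' - s⟫ - ⟪w, s' - s⟫ = ⟪xstar y - w, s' - s⟫ :=
      (inner_sub_left _ _ _).symm
    have CS : ⟪xstar y - w, s' - s⟫ ≤ ‖xstar y - w‖ * r := by
      rw [hr]; exact real_inner_le_norm _ _
    have F3' : μ / 2 * ‖xstar y - w‖ ^ 2 ≤ ξ := le_trans hdist hw
    have step3 := mul_le_mul_of_nonneg_left CS (by positivity : (0:ℝ) ≤ 2 * μ)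
    have step4 : μ * (μ / 2 * ‖xstar y - w‖ ^ 2) ≤ μ * ξ := mul_le_mul_of_nonneg_left F3' hμ.le
    have H2' : 2 * μ * (⟪xstar y, s' - s⟫ - ⟪w, s' - s⟫) ≤ 2 * μ * ξ + r ^ 2 := by
      rw [id2]
      linarith [sq_nonneg (μ * ‖xstar y - w‖ - r), step3, step4]
    have H3 : φ y - Ψ w y ≤ ξ := by rw [hφ y]; exact hw
    have H3' : 2 * μ * (φ y - Ψ w y) ≤ 2 * μ * ξ :=
      mul_le_mul_of_nonneg_left H3 (by linarith)
    have key : 2 * μ * (φ y' - Ψ w y + ξ - ⟪w, s' - s⟫) ≤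
        2 * μ * (3 * ξ) + 2 * (sSup (spectrum ℝ (Aᵀ * A)) * ‖d‖ ^ 2) := by
      linarith [H1', H2', H3', H4]
    rw [hAd, hLφ]
    have hgoal' : (φ y' - (Ψ w y - ξ + ⟪w, s' - s⟫) - 3 * ξ) * μ ≤
        sSup (spectrum ℝ (Aᵀ * A)) * ‖d‖ ^ 2 := by linarith [key]
    have hdd : sSup (spectrum ℝ (Aᵀ * A)) / μ * ‖d‖ ^ 2
        = sSup (spectrum ℝ (Aᵀ * A)) * ‖d‖ ^ 2 / μ := by ring
    rw [hdd, ← sub_le_iff_le_add, le_div_iff₀ hμ]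
    linarith
  -- lower bound
  · intro y' hrange
    set s' : EuclideanSpace ℝ (Fin n) := Matrix.toEuclideanLin Aᵀ y' with hs'
    set d : EuclideanSpace ℝ (Fin p) := y' - y with hd
    have hds : s' - s = Matrix.toEuclideanLin Aᵀ d := by rw [hd, hs', hs, map_sub]
    have hAd : ⟪Matrix.toEuclideanLin A w, d⟫ = ⟪w, s' - s⟫ := by
      rw [inner_tEL A w d, ← hds]
    set r : ℝ := ‖s' - s‖ with hr
    have H4 : sInf (spectrum ℝ (Aᵀ * A) ∩ Set.Ioi 0) * ‖d‖ ^ 2 ≤ r ^ 2 := by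
      rw [hr, hds]; exact quadL A d hrange
    set u : EuclideanSpace ℝ (Fin n) := s' - gw with hu
    set q : ℝ := ‖u‖ with hq
    have hdesc := descent_lemma f L hdiff hsmooth w (L⁻¹ • u)
    have hn : ‖L⁻¹ • u‖ ^ 2 = L⁻¹ ^ 2 * q ^ 2 := by
      rw [norm_smul, Real.norm_eq_abs, abs_of_pos (inv_pos.2 hL), mul_pow]
    have hi1 : ⟪gw, L⁻¹ • u⟫ = L⁻¹ * ⟪gw, u⟫ := real_inner_smul_right _ _ _
    have hi2 : ⟪s', L⁻¹ • u⟫ = L⁻¹ * ⟪s', u⟫ := real_inner_smul_right _ _ _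
    have hi3 : ⟪s', u⟫ - ⟪gw, u⟫ = q ^ 2 := by
      rw [hq, hu, ← inner_sub_left, real_inner_self_eq_norm_sq]
    have hΨz : Ψ (w + L⁻¹ • u) y' = ⟪s', w⟫ + L⁻¹ * ⟪s', u⟫ - f (w + L⁻¹ • u) := by
      rw [hΨ, ← hs', inner_add_right, hi2]
    have hub := hΨle (w + L⁻¹ • u) y'
    rw [hΨz, ← hφ y'] at hub
    rw [hn, hi1] at hdesc
    have hid1 : L⁻¹ * ⟪s', u⟫ - L⁻¹ * ⟪gw, u⟫ = L⁻¹ * q ^ 2 := by rw [← hi3]; ring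
    have hid2 : L⁻¹ * q ^ 2 - L / 2 * (L⁻¹ ^ 2 * q ^ 2) = 1 / (2 * L) * q ^ 2 := by
      field_simp
      ring
    have K1 : ⟪s', w⟫ - f w + 1 / (2 * L) * q ^ 2 ≤ φ y' := by linarith
    have id3 : ⟪s', w⟫ - ⟪s, w⟫ = ⟪w, s' - s⟫ := by
      rw [inner_sub_right, real_inner_comm w s', real_inner_comm w s]
    have hG : 1 / (2 * L) * q ^ 2 + ξ ≤ φ y' - (Ψ w y - ξ + ⟪w, s' - s⟫) := by
      linarith
    have htr : r ≤ q + ‖gw - s‖ := by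
      have h5 : s' - s = u + (gw - s) := by rw [hu]; abel
      rw [hr, h5]; exact norm_add_le _ _
    have h6 : r ^ 2 ≤ (q + ‖gw - s‖) ^ 2 := by
      have := pow_le_pow_left₀ (by rw [hr]; exact norm_nonneg _) htr 2
      exact this
    have hq2 : r ^ 2 ≤ 2 * q ^ 2 + 2 * ‖gw - s‖ ^ 2 := by
      nlinarith [h6, sq_nonneg (q - ‖gw - s‖)]
    have hr2 : r ^ 2 ≤ 2 * q ^ 2 + 4 * L * ξ := by linarith
    rw [hAd, hμφ]
    have h4L : (0:ℝ) < 4 * L := by linarith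
    have hfinal : sInf (spectrum ℝ (Aᵀ * A) ∩ Set.Ioi 0) / L / 4 * ‖d‖ ^ 2 * (4 * L) ≤
        (1 / (2 * L) * q ^ 2 + ξ) * (4 * L) := by
      have e1 : sInf (spectrum ℝ (Aᵀ * A) ∩ Set.Ioi 0) / L / 4 * ‖d‖ ^ 2 * (4 * L) =
          sInf (spectrum ℝ (Aᵀ * A) ∩ Set.Ioi 0) * ‖d‖ ^ 2 := by
        have hLne : L ≠ 0 := ne_of_gt hL
        field_simp
      have e2 : (1 / (2 * L) * q ^ 2 + ξ) * (4 * L) = 2 * q ^ 2 + 4 * L * ξ := by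
        field_simp; ring
      rw [e1, e2]
      linarith
    have hhalf := (mul_le_mul_iff_of_pos_right h4L).mp hfinal
    calc sInf (spectrum ℝ (Aᵀ * A) ∩ Set.Ioi 0) / L / 4 * ‖d‖ ^ 2
        ≤ 1 / (2 * L) * q ^ 2 + ξ := hhalf
    _ ≤ _ := hG
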